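/- Let q be an odd prime power and a, b, c ∈ F_q. The q-linearized polynomial L(X) = aX^{q²} + bX^q + cX has no roots in F_{q³}* if and only if a³ + b³ + c³ - 3abc ≠ 0. -/

import Mathlib

set_option maxHeartbeats 1000000 in
theorem stmt0 (q : ℕ) (hodd : Odd q) (hpp : ∃ p n : ℕ, Nat.Prime p ∧ 0 < n ∧ q = p ^ n)
    (K L : Type) [Field K] [Field L] [Fintype K] [Fintype L] [Algebra K L]
    (hK : Fintype.card K = q) (hL : Fintype.card L = q ^ 3)
    (a b c : K) :
    (∀ x : L, x ≠ 0 →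
        algebraMap K L a * x ^ q ^ 2 + algebraMap K L b * x ^ q + algebraMap K L c * x ≠ 0)
      ↔ a ^ 3 + b ^ 3 + c ^ 3 - 3 * a * b * c ≠ 0 := by
  classical
  obtain ⟨p, n, hp, hn, hq⟩ := hpp
  haveI : Fact p.Prime := ⟨hp⟩
  have hcharL : CharP L p := by
    obtain ⟨m, hrp, hcard⟩ := FiniteField.card L (ringChar L)
    have hr : ringChar L = p := by
      have h1 : ringChar L ∣ p ^ (3 * n) := by
        have h2 : Fintype.card L = p ^ (3 * n) := by
          rw [hL, hq, ← pow_mul, Nat.mul_comm]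
        rw [h2] at hcard
        exact hcard ▸ dvd_pow_self (ringChar L) m.ne_zero
      exact (Nat.prime_dvd_prime_iff_eq hrp hp).mp (hrp.dvd_of_dvd_pow h1)
    exact hr ▸ ringChar.charP L
  haveI := hcharL
  have hq1 : 1 < q := by
    rw [hq]; exact Nat.one_lt_pow hn.ne' hp.one_lt
  have hq0 : q ≠ 0 := by omega
  have hinj : Function.Injective (algebraMap K L) := (algebraMap K L).injective
  have hadd : ∀ z w : L, (z + w) ^ q = z ^ q + w ^ q := by
    intro z w; rw [hq]; exact add_pow_char_pow z w p n
  have hmap : ∀ t : K, (algebraMap K L t) ^ q = algebraMap K L t := by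
    intro t
    rw [← map_pow]
    congr 1
    rw [← hK]
    exact FiniteField.pow_card t
  have hq3 : ∀ z : L, z ^ q ^ 3 = z := by
    intro z; rw [← hL]; exact FiniteField.pow_card z
  set A := algebraMap K L a with hA
  set B := algebraMap K L b with hB
  set C := algebraMap K L c with hC
  have hfrobeq : ∀ x : L, A * x ^ q ^ 2 + B * x ^ q + C * x = 0 →
      A * x + B * x ^ q ^ 2 + C * x ^ q = 0 := by
    intro x hE
    have h := congrArg (· ^ q) hE
    simp only [hadd, mul_pow, hmap, zero_pow hq0, ← pow_mul, ← hA, ← hB, ← hC] at h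
    have e1 : q ^ 2 * q = q ^ 3 := by ring
    have e2 : q * q = q ^ 2 := by ring
    rw [e1, e2, hq3] at h
    rw [show A ^ q = A from hmap a, show B ^ q = B from hmap b, show C ^ q = C from hmap c] at h
    linear_combination h
  constructor
  · -- no nonzero roots → D ≠ 0  (contrapositive)
    intro hroots hD
    -- D = 0 : build a nonzero root
    set M : Matrix (Fin 3) (Fin 3) K := !![c, a, b; b, c, a; a, b, c] with hM
    have hdet : M.det = 0 := by
      rw [hM, Matrix.det_fin_three]
      simp [Matrix.cons_val_zero, Matrix.cons_val_one]
      linear_combination hD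
    obtain ⟨v, hv, hmv⟩ := Matrix.exists_mulVec_eq_zero_iff.mpr hdet
    have row : ∀ i, M.mulVec v i = 0 := fun i => congrFun hmv i
    have r0 : c * v 0 + a * v 1 + b * v 2 = 0 := by
      have := row 0
      simpa [hM, Matrix.mulVec, dotProduct, Fin.sum_univ_three, mul_comm] using this
    have r1 : b * v 0 + c * v 1 + a * v 2 = 0 := by
      have := row 1
      simpa [hM, Matrix.mulVec, dotProduct, Fin.sum_univ_three, mul_comm] using this
    have r2 : a * v 0 + b * v 1 + c * v 2 = 0 := by
      have := row 2
      simpa [hM, Matrix.mulVec, dotProduct, Fin.sum_univ_three, mul_comm] using this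
    set β0 := algebraMap K L (v 0) with hβ0
    set β1 := algebraMap K L (v 1) with hβ1
    set β2 := algebraMap K L (v 2) with hβ2
    -- find y with β0 y + β1 y^q + β2 y^{q²} ≠ 0
    obtain ⟨i, hi⟩ : ∃ i, v i ≠ 0 := by
      by_contra h
      push_neg at h
      exact hv (funext h)
    set P : Polynomial L := Polynomial.C β0 * Polynomial.X +
        Polynomial.C β1 * Polynomial.X ^ q + Polynomial.C β2 * Polynomial.X ^ (q ^ 2) with hP
    have hq2q : q ^ 2 ≠ q := by nlinarith
    have hq21 : q ^ 2 ≠ 1 := by nlinarith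
    have hPne : P ≠ 0 := by
      intro h0
      have c1 : P.coeff 1 = β0 := by
        simp [hP, Polynomial.coeff_X_pow, Polynomial.coeff_X, hq1.ne, hq1.ne', hq21, hq21.symm,
          Ne.symm hq2q]
      have cq : P.coeff q = β1 := by
        simp [hP, Polynomial.coeff_X_pow, Polynomial.coeff_X, hq1.ne, hq1.ne', hq2q, hq2q.symm]
      have cq2 : P.coeff (q ^ 2) = β2 := by
        simp [hP, Polynomial.coeff_X_pow, Polynomial.coeff_X, hq21, hq21.symm, hq2q, hq2q.symm]
      have z0 : v 0 = 0 := hinj (by rw [map_zero, ← hβ0, ← c1, h0, Polynomial.coeff_zero])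
      have z1 : v 1 = 0 := hinj (by rw [map_zero, ← hβ1, ← cq, h0, Polynomial.coeff_zero])
      have z2 : v 2 = 0 := hinj (by rw [map_zero, ← hβ2, ← cq2, h0, Polynomial.coeff_zero])
      apply hi
      fin_cases i
      · exact z0
      · exact z1
      · exact z2
    have hdeg : P.natDegree ≤ q ^ 2 := by
      apply (Polynomial.natDegree_add_le _ _).trans
      apply max_le
      · apply (Polynomial.natDegree_add_le _ _).trans
        apply max_le
        · exact (Polynomial.natDegree_C_mul_le _ _).trans
            (by simp [Polynomial.natDegree_X]; nlinarith)
        · exact (Polynomial.natDegree_C_mul_le _ _).trans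
            (by simp [Polynomial.natDegree_X_pow]; nlinarith)
      · exact (Polynomial.natDegree_C_mul_le _ _).trans
          (by simp [Polynomial.natDegree_X_pow])
    obtain ⟨y, hy⟩ : ∃ y : L, y ∉ P.roots.toFinset := by
      by_contra h
      push_neg at h
      have h1 : (Finset.univ : Finset L) ⊆ P.roots.toFinset := fun z _ => h z
      have h2 : Fintype.card L ≤ P.roots.toFinset.card := by
        simpa using Finset.card_le_card h1
      have h3 : P.roots.toFinset.card ≤ q ^ 2 :=
        (Multiset.toFinset_card_le _).trans ((Polynomial.card_roots' P).trans hdeg)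
      rw [hL] at h2
      have : q ^ 3 ≤ q ^ 2 := le_trans h2 h3
      have := Nat.pow_lt_pow_right hq1 (by norm_num : 2 < 3)
      omega
    have hyne : β0 * y + β1 * y ^ q + β2 * y ^ (q ^ 2) ≠ 0 := by
      intro h0
      apply hy
      rw [Multiset.mem_toFinset, Polynomial.mem_roots']
      refine ⟨hPne, ?_⟩
      simp [Polynomial.IsRoot, hP, Polynomial.eval_add, Polynomial.eval_mul]
      linear_combination h0
    set x := β0 * y + β1 * y ^ q + β2 * y ^ (q ^ 2) with hx
    -- compute x^q and x^{q²}
    have hxq : x ^ q = β0 * y ^ q + β1 * y ^ (q ^ 2) + β2 * y := by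
      rw [hx, hadd, hadd, mul_pow, mul_pow, mul_pow, hβ0, hβ1, hβ2, hmap, hmap, hmap,
        ← pow_mul, ← pow_mul]
      have e1 : q * q = q ^ 2 := by ring
      have e2 : q ^ 2 * q = q ^ 3 := by ring
      rw [e1, e2, hq3]
    have hxq2 : x ^ (q ^ 2) = β0 * y ^ (q ^ 2) + β1 * y + β2 * y ^ q := by
      have e0 : x ^ (q ^ 2) = (x ^ q) ^ q := by
        rw [← pow_mul]; congr 1; ring
      rw [e0, hxq, hadd, hadd, mul_pow, mul_pow, mul_pow, hβ0, hβ1, hβ2,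
        hmap, hmap, hmap, ← pow_mul, ← pow_mul,
        (by ring : q ^ 2 * q = q ^ 3), hq3, (by ring : q * q = q ^ 2)]
    have hroot : A * x ^ q ^ 2 + B * x ^ q + C * x = 0 := by
      rw [hxq, hxq2, hx]
      have m0 : C * β0 + A * β1 + B * β2 = 0 := by
        rw [hA, hB, hC, hβ0, hβ1, hβ2, ← map_mul, ← map_mul, ← map_mul, ← map_add, ← map_add]
        rw [show c * v 0 + a * v 1 + b * v 2 = 0 from r0, map_zero]
      have m1 : B * β0 + C * β1 + A * β2 = 0 := by
        rw [hA, hB, hC, hβ0, hβ1, hβ2, ← map_mul, ← map_mul, ← map_mul, ← map_add, ← map_add]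
        rw [show b * v 0 + c * v 1 + a * v 2 = 0 from r1, map_zero]
      have m2 : A * β0 + B * β1 + C * β2 = 0 := by
        rw [hA, hB, hC, hβ0, hβ1, hβ2, ← map_mul, ← map_mul, ← map_mul, ← map_add, ← map_add]
        rw [show a * v 0 + b * v 1 + c * v 2 = 0 from r2, map_zero]
      linear_combination y * m0 + y ^ q * m1 + y ^ (q ^ 2) * m2
    exact hroots x hyne hroot
  · -- D ≠ 0 → no nonzero roots
    intro hD x hx hE
    have e1 := hfrobeq x hE
    have e2 : A * x ^ q + B * x + C * x ^ q ^ 2 = 0 := by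
      have h := congrArg (· ^ q) e1
      simp only [hadd, mul_pow, hmap, zero_pow hq0, ← pow_mul, ← hA, ← hB, ← hC] at h
      have f1 : q ^ 2 * q = q ^ 3 := by ring
      have f2 : q * q = q ^ 2 := by ring
      rw [f1, f2, hq3] at h
      rw [show A ^ q = A from hmap a, show B ^ q = B from hmap b, show C ^ q = C from hmap c] at h
      linear_combination h
    have key : algebraMap K L (a ^ 3 + b ^ 3 + c ^ 3 - 3 * a * b * c) * x = 0 := by
      have expand : algebraMap K L (a ^ 3 + b ^ 3 + c ^ 3 - 3 * a * b * c)
          = A ^ 3 + B ^ 3 + C ^ 3 - 3 * A * B * C := by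
        rw [hA, hB, hC]
        simp only [map_sub, map_add, map_pow, map_mul, map_ofNat]
      rw [expand]
      linear_combination (C * C - A * B) * hE + (A * A - B * C) * e1 + (B * B - C * A) * e2
    rcases mul_eq_zero.mp key with h | h
    · exact hD (by simpa using hinj (h.trans (map_zero _).symm))
    · exact hx h
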